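/- Let b ∈ R with b > 2, c = sqrt(b-2), d = sqrt(b+2), and x(u,v) = ((cosh cu)/c, (sinh cu)/c, (cos dv)/d, (sin dv)/d, b/(cd)). Then the first fundamental form coefficients are E = ⟨x_u,x_u⟩ = -sinh^2(cu) + cosh^2(cu) = 1, F = 0, G = 1, and the mean curvature vector H = (1/2)(x_uu + x_vv) + x satisfies ⟨H, H⟩ = 0 with H ≠ 0; that is, the surface is flat, space-like, and quasi-minimal in S^4_1(1). -/

import Mathlib

open Real

/-- The indefinite inner product of the Minkowski space `E⁵₁`. -/
noncomputable def mink (x y : Fin 5 → ℝ) : ℝ :=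
  -(x 0 * y 0) + x 1 * y 1 + x 2 * y 2 + x 3 * y 3 + x 4 * y 4

/-- The surface (iv): `x(u,v) = ((cosh cu)/c, (sinh cu)/c, (cos dv)/d, (sin dv)/d, b/(cd))`,
where `c = √(b-2)`, `d = √(b+2)`. -/
noncomputable def surf (b u v : ℝ) : Fin 5 → ℝ :=
  let c := Real.sqrt (b - 2)
  let d := Real.sqrt (b + 2)
  ![Real.cosh (c * u) / c, Real.sinh (c * u) / c,
    Real.cos (d * v) / d, Real.sin (d * v) / d, b / (c * d)]

/-- Partial derivative with respect to `u`. -/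
noncomputable def surfU (b u v : ℝ) : Fin 5 → ℝ := fun i => deriv (fun t => surf b t v i) u

/-- Partial derivative with respect to `v`. -/
noncomputable def surfV (b u v : ℝ) : Fin 5 → ℝ := fun i => deriv (fun t => surf b u t i) v

/-- Second partial derivative with respect to `u`. -/
noncomputable def surfUU (b u v : ℝ) : Fin 5 → ℝ :=
  fun i => deriv (fun t => deriv (fun s => surf b s v i) t) u

/-- Second partial derivative with respect to `v`. -/
noncomputable def surfVV (b u v : ℝ) : Fin 5 → ℝ :=
  fun i => deriv (fun t => deriv (fun s => surf b u s i) t) v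

/-- The mean curvature vector of the surface in `S⁴₁(1)`: `H = (1/2)(x_uu + x_vv) + x`. -/
noncomputable def meanCurv (b u v : ℝ) : Fin 5 → ℝ :=
  fun i => (1 / 2) * (surfUU b u v i + surfVV b u v i) + surf b u v i

lemma hd_cosh (c u : ℝ) : HasDerivAt (fun t => Real.cosh (c*t)) (c * Real.sinh (c*u)) u := by
  simpa [mul_comm, Function.comp_def] using (Real.hasDerivAt_cosh (c*u)).comp u ((hasDerivAt_id u).const_mul c)

lemma hd_sinh (c u : ℝ) : HasDerivAt (fun t => Real.sinh (c*t)) (c * Real.cosh (c*u)) u := by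
  simpa [mul_comm, Function.comp_def] using (Real.hasDerivAt_sinh (c*u)).comp u ((hasDerivAt_id u).const_mul c)

lemma hd_cos (c u : ℝ) : HasDerivAt (fun t => Real.cos (c*t)) (-(c * Real.sin (c*u))) u := by
  simpa [mul_comm, Function.comp_def] using (Real.hasDerivAt_cos (c*u)).comp u ((hasDerivAt_id u).const_mul c)

lemma hd_sin (c u : ℝ) : HasDerivAt (fun t => Real.sin (c*t)) (c * Real.cos (c*u)) u := by
  simpa [mul_comm, Function.comp_def] using (Real.hasDerivAt_sin (c*u)).comp u ((hasDerivAt_id u).const_mul c)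

lemma d1_cosh (c : ℝ) (hc : c ≠ 0) (u : ℝ) :
    deriv (fun t => Real.cosh (c*t)/c) u = Real.sinh (c*u) := by
  rw [((hd_cosh c u).div_const c).deriv, mul_div_cancel_left₀ _ hc]

lemma d1_sinh (c : ℝ) (hc : c ≠ 0) (u : ℝ) :
    deriv (fun t => Real.sinh (c*t)/c) u = Real.cosh (c*u) := by
  rw [((hd_sinh c u).div_const c).deriv, mul_div_cancel_left₀ _ hc]

lemma d1_cos (c : ℝ) (hc : c ≠ 0) (u : ℝ) :
    deriv (fun t => Real.cos (c*t)/c) u = -Real.sin (c*u) := by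
  rw [((hd_cos c u).div_const c).deriv, neg_div, mul_div_cancel_left₀ _ hc]

lemma d1_sin (c : ℝ) (hc : c ≠ 0) (u : ℝ) :
    deriv (fun t => Real.sin (c*t)/c) u = Real.cos (c*u) := by
  rw [((hd_sin c u).div_const c).deriv, mul_div_cancel_left₀ _ hc]

/-- For `b > 2`, `c = √(b-2)`, `d = √(b+2)`, the surface
`x(u,v) = ((cosh cu)/c, (sinh cu)/c, (cos dv)/d, (sin dv)/d, b/(cd))` has first fundamental
form coefficients `E = 1`, `F = 0`, `G = 1`, and the mean curvature vector
`H = (1/2)(x_uu + x_vv) + x` satisfies `⟨H,H⟩ = 0` with `H ≠ 0`; that is, the surface is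
flat, space-like, and quasi-minimal in `S⁴₁(1)`. -/
theorem surface_iv_quasiMinimal (b : ℝ) (hb : 2 < b) :
    ∀ u v : ℝ,
      mink (surfU b u v) (surfU b u v) = 1 ∧
      mink (surfU b u v) (surfV b u v) = 0 ∧
      mink (surfV b u v) (surfV b u v) = 1 ∧
      mink (meanCurv b u v) (meanCurv b u v) = 0 ∧
      meanCurv b u v ≠ 0 := by
  intro u v
  set c := Real.sqrt (b - 2) with hc
  set d := Real.sqrt (b + 2) with hd
  have hcpos : 0 < c := Real.sqrt_pos.mpr (by linarith)
  have hdpos : 0 < d := Real.sqrt_pos.mpr (by linarith)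
  have hc0 : c ≠ 0 := ne_of_gt hcpos
  have hd0 : d ≠ 0 := ne_of_gt hdpos
  have hc2 : c ^ 2 = b - 2 := Real.sq_sqrt (by linarith)
  have hd2 : d ^ 2 = b + 2 := Real.sq_sqrt (by linarith)
  -- first derivatives
  have hU0 : surfU b u v 0 = Real.sinh (c*u) := d1_cosh c hc0 u
  have hU1 : surfU b u v 1 = Real.cosh (c*u) := d1_sinh c hc0 u
  have hU2 : surfU b u v 2 = 0 := deriv_const u _
  have hU3 : surfU b u v 3 = 0 := deriv_const u _
  have hU4 : surfU b u v 4 = 0 := deriv_const u _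
  have hV0 : surfV b u v 0 = 0 := deriv_const v _
  have hV1 : surfV b u v 1 = 0 := deriv_const v _
  have hV2 : surfV b u v 2 = -Real.sin (d*v) := d1_cos d hd0 v
  have hV3 : surfV b u v 3 = Real.cos (d*v) := d1_sin d hd0 v
  have hV4 : surfV b u v 4 = 0 := deriv_const v _
  -- second derivatives
  have hUU0 : surfUU b u v 0 = c * Real.cosh (c*u) := by
    show deriv (fun t => deriv (fun s => Real.cosh (c*s)/c) t) u = _
    rw [funext fun t => d1_cosh c hc0 t, (hd_sinh c u).deriv]
  have hUU1 : surfUU b u v 1 = c * Real.sinh (c*u) := by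
    show deriv (fun t => deriv (fun s => Real.sinh (c*s)/c) t) u = _
    rw [funext fun t => d1_sinh c hc0 t, (hd_cosh c u).deriv]
  have hUU2 : surfUU b u v 2 = 0 := by
    show deriv (fun t => deriv (fun _ : ℝ => Real.cos (d*v)/d) t) u = 0
    simp
  have hUU3 : surfUU b u v 3 = 0 := by
    show deriv (fun t => deriv (fun _ : ℝ => Real.sin (d*v)/d) t) u = 0
    simp
  have hUU4 : surfUU b u v 4 = 0 := by
    show deriv (fun t => deriv (fun _ : ℝ => b/(c*d)) t) u = 0
    simp
  have hVV0 : surfVV b u v 0 = 0 := by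
    show deriv (fun t => deriv (fun _ : ℝ => Real.cosh (c*u)/c) t) v = 0
    simp
  have hVV1 : surfVV b u v 1 = 0 := by
    show deriv (fun t => deriv (fun _ : ℝ => Real.sinh (c*u)/c) t) v = 0
    simp
  have hVV2 : surfVV b u v 2 = -(d * Real.cos (d*v)) := by
    show deriv (fun t => deriv (fun s => Real.cos (d*s)/d) t) v = _
    rw [funext fun t => d1_cos d hd0 t]
    simpa using ((hd_sin d v).neg).deriv
  have hVV3 : surfVV b u v 3 = -(d * Real.sin (d*v)) := by
    show deriv (fun t => deriv (fun s => Real.sin (d*s)/d) t) v = _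
    rw [funext fun t => d1_sin d hd0 t, (hd_cos d v).deriv]
  have hVV4 : surfVV b u v 4 = 0 := by
    show deriv (fun t => deriv (fun _ : ℝ => b/(c*d)) t) v = 0
    simp
  -- surf components
  have hS0 : surf b u v 0 = Real.cosh (c*u)/c := rfl
  have hS1 : surf b u v 1 = Real.sinh (c*u)/c := rfl
  have hS2 : surf b u v 2 = Real.cos (d*v)/d := rfl
  have hS3 : surf b u v 3 = Real.sin (d*v)/d := rfl
  have hS4 : surf b u v 4 = b/(c*d) := rfl
  have hch : Real.cosh (c*u) ^ 2 - Real.sinh (c*u) ^ 2 = 1 := Real.cosh_sq_sub_sinh_sq (c*u)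
  have htr : Real.sin (d*v) ^ 2 + Real.cos (d*v) ^ 2 = 1 := Real.sin_sq_add_cos_sq (d*v)
  have H0 : meanCurv b u v 0 = b * Real.cosh (c*u) / (2*c) := by
    simp only [meanCurv, hUU0, hVV0, hS0]
    field_simp
    linear_combination Real.cosh (c*u) * hc2
  have H1 : meanCurv b u v 1 = b * Real.sinh (c*u) / (2*c) := by
    simp only [meanCurv, hUU1, hVV1, hS1]
    field_simp
    linear_combination Real.sinh (c*u) * hc2
  have H2 : meanCurv b u v 2 = -(b * Real.cos (d*v) / (2*d)) := by
    simp only [meanCurv, hUU2, hVV2, hS2]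
    field_simp
    linear_combination (-Real.cos (d*v)) * hd2
  have H3 : meanCurv b u v 3 = -(b * Real.sin (d*v) / (2*d)) := by
    simp only [meanCurv, hUU3, hVV3, hS3]
    field_simp
    linear_combination (-Real.sin (d*v)) * hd2
  have H4 : meanCurv b u v 4 = b / (c*d) := by
    simp only [meanCurv, hUU4, hVV4, hS4]
    ring
  refine ⟨?_, ?_, ?_, ?_, ?_⟩
  · simp only [mink, hU0, hU1, hU2, hU3, hU4]
    ring_nf
    linear_combination hch
  · simp only [mink, hU0, hU1, hU2, hU3, hU4, hV0, hV1, hV2, hV3, hV4]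
    ring
  · simp only [mink, hV0, hV1, hV2, hV3, hV4]
    ring_nf
    linear_combination htr
  · simp only [mink, H0, H1, H2, H3, H4]
    field_simp
    linear_combination (-(b^2*d^2))*hch + (b^2*c^2)*htr + (b^2)*hc2 + (-(b^2))*hd2
  · intro h
    have h4 := congrFun h 4
    rw [H4] at h4
    exact div_ne_zero (by linarith) (mul_ne_zero hc0 hd0) h4
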